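/- Let G be a simple graph on Fin 15 with G.IsSRGWith 15 6 1 3. Then the characteristic polynomial of G.adjMatrix ℚ equals (X − 6) * (X − 1)^9 * (X + 3)^5 in ℚ[X]. In particular the eigenvalues of the adjacency matrix are 6, 1, −3 with multiplicities 1, 9, 5. -/

import Mathlib

open Polynomial

open Matrix

lemma aux_root {n : Type*} [Fintype n] [DecidableEq n] (M : Matrix n n ℂ)
    (hMzero : (M - 6) * ((M - 1) * (M + 3)) = 0) :
    ∀ r ∈ M.charpoly.roots, r = 6 ∨ r = 1 ∨ r = -3 := by
  intro r hr
  have hr0 : M.charpoly.eval r = 0 := isRoot_of_mem_roots hr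
  have hdet : (r • (1 : Matrix n n ℂ) - M).det = 0 := by
    have h : M.charpoly.eval r = (r • (1 : Matrix n n ℂ) - M).det := by
      rw [Matrix.charpoly, eval_det, matPolyEquiv_charmatrix]
      simp only [eval_sub, eval_X, eval_C, smul_eq_diagonal_mul]
      congr 1
      ext i j
      by_cases hij : i = j <;> simp [Matrix.scalar_apply, Matrix.one_apply, hij]
    rw [← h]; exact hr0
  obtain ⟨v, hv0, hv⟩ := (Matrix.exists_mulVec_eq_zero_iff).2 hdet
  have hMv : M *ᵥ v = r • v := by
    rw [Matrix.sub_mulVec, Matrix.smul_mulVec, Matrix.one_mulVec, sub_eq_zero] at hv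
    exact hv.symm
  have h3 : (3 : Matrix n n ℂ) = (3:ℂ) • 1 := by
    rw [← map_ofNat (algebraMap ℂ (Matrix n n ℂ)) 3, Algebra.algebraMap_eq_smul_one]
  have h6 : (6 : Matrix n n ℂ) = (6:ℂ) • 1 := by
    rw [← map_ofNat (algebraMap ℂ (Matrix n n ℂ)) 6, Algebra.algebraMap_eq_smul_one]
  have s1 : (M + 3) *ᵥ v = (r + 3) • v := by
    rw [Matrix.add_mulVec, h3, Matrix.smul_mulVec, Matrix.one_mulVec, hMv, ← add_smul]
  have s2 : (M - 1) *ᵥ v = (r - 1) • v := by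
    rw [Matrix.sub_mulVec, Matrix.one_mulVec, hMv, sub_smul, one_smul]
  have s3 : (M - 6) *ᵥ v = (r - 6) • v := by
    rw [Matrix.sub_mulVec, h6, Matrix.smul_mulVec, Matrix.one_mulVec, hMv, ← sub_smul]
  have key : ((r - 6) * ((r - 1) * (r + 3))) • v = 0 := by
    have e : ((M - 6) * ((M - 1) * (M + 3))) *ᵥ v = ((r - 6) * ((r - 1) * (r + 3))) • v := by
      rw [← Matrix.mulVec_mulVec, ← Matrix.mulVec_mulVec, s1, Matrix.mulVec_smul, s2,
        Matrix.mulVec_smul, Matrix.mulVec_smul, s3, smul_smul, smul_smul]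
      congr 1
      ring
    rw [← e, hMzero, Matrix.zero_mulVec]
  have hs : (r - 6) * ((r - 1) * (r + 3)) = 0 := by
    by_contra h
    exact hv0 (by simpa [h] using smul_eq_zero.mp key)
  rcases mul_eq_zero.mp hs with h | h
  · exact Or.inl (by linear_combination h)
  · rcases mul_eq_zero.mp h with h' | h'
    · exact Or.inr (Or.inl (by linear_combination h'))
    · exact Or.inr (Or.inr (by linear_combination h'))

lemma aux_decomp {n : Type*} [Fintype n] [DecidableEq n] (M : Matrix n n ℂ)
    (hcard : Fintype.card n = 15)
    (hroot : ∀ r ∈ M.charpoly.roots, r = 6 ∨ r = 1 ∨ r = -3)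
    (htr : M.trace = 0) :
    ∃ a b c : ℕ, a + b + c = 15 ∧ 6 * a + b = 3 * c ∧
      M.charpoly = (X - C (6:ℂ)) ^ a * (X - C 1) ^ b * (X + C 3) ^ c := by
  have : Nonempty n := Fintype.card_pos_iff.mp (by omega)
  set p := M.charpoly with hp
  have hmonic : p.Monic := charpoly_monic M
  have hsplits : p.Splits := IsAlgClosed.splits p
  have hdeg : p.natDegree = 15 := by rw [hp, charpoly_natDegree_eq_dim, hcard]
  have hcardroots : p.roots.card = 15 := by
    rw [(splits_iff_card_roots).mp hsplits, hdeg]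
  set a := p.roots.count 6 with ha
  set b := p.roots.count 1 with hb
  set c := p.roots.count (-3) with hc
  have hR : p.roots = Multiset.replicate a 6 + Multiset.replicate b 1
      + Multiset.replicate c (-3) := by
    ext x
    rw [Multiset.count_add, Multiset.count_add, Multiset.count_replicate,
      Multiset.count_replicate, Multiset.count_replicate]
    by_cases h6 : x = 6
    · subst h6
      rw [if_pos rfl, if_neg (by norm_num), if_neg (by norm_num), ha]
      norm_num
    · by_cases h1 : x = 1
      · subst h1
        rw [if_pos rfl, if_neg (by norm_num), if_neg (by norm_num), hb]
        norm_num
      · by_cases h3 : x = -3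
        · subst h3
          rw [if_pos rfl, if_neg (by norm_num), if_neg (by norm_num), hc]
          norm_num
        · have hxn : x ∉ p.roots := fun hx => by
            rcases hroot x hx with h | h | h <;> simp_all
          rw [Multiset.count_eq_zero.mpr hxn, if_neg (Ne.symm h6), if_neg (Ne.symm h1),
            if_neg (Ne.symm h3)]
  refine ⟨a, b, c, ?_, ?_, ?_⟩
  · have h := congrArg Multiset.card hR
    simp only [hcardroots, Multiset.card_add, Multiset.card_replicate] at h
    omega
  · have hsum : p.roots.sum = 0 := by
      rw [← Matrix.trace_eq_sum_roots_charpoly, htr]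
    rw [hR] at hsum
    simp only [Multiset.sum_add, Multiset.sum_replicate, nsmul_eq_mul] at hsum
    have : ((6 * a + b : ℕ) : ℂ) = ((3 * c : ℕ) : ℂ) := by
      push_cast
      linear_combination hsum
    exact_mod_cast this
  · have hprod := hsplits.eq_prod_roots_of_monic hmonic
    rw [hR] at hprod
    simp only [Multiset.map_add, Multiset.prod_add, Multiset.map_replicate,
      Multiset.prod_replicate] at hprod
    rw [hprod]
    rw [map_neg, sub_neg_eq_add]

/-- Lemma 6.1: the characteristic polynomial of the adjacency matrix of the
point graph of `GQ(2,2)` (a strongly regular graph with parameters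
`(15,6,1,3)`) is `(X−6)(X−1)⁹(X+3)⁵`, so the eigenvalues are `6, 1, −3` with
multiplicities `1, 9, 5`. -/
theorem stmt_14 (G : SimpleGraph (Fin 15)) [DecidableRel G.Adj]
    (hG : G.IsSRGWith 15 6 1 3) :
    (G.adjMatrix ℚ).charpoly =
      (X - C (6 : ℚ)) * (X - C (1 : ℚ)) ^ 9 * (X + C (3 : ℚ)) ^ 5 := by
  classical
  set A := G.adjMatrix ℚ with hA
  set J : Matrix (Fin 15) (Fin 15) ℚ := Matrix.of (fun _ _ => (1:ℚ)) with hJ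
  -- the basic matrix identities
  have hCom : Gᶜ.adjMatrix ℚ = J - 1 - A := by
    ext i j
    by_cases h : i = j
    · subst h; simp [hJ, SimpleGraph.compl_adj, Matrix.one_apply, hA]
    · by_cases ha : G.Adj i j <;>
        simp [hJ, SimpleGraph.compl_adj, Matrix.one_apply, h, ha, hA]
  have h6 : (6 : Matrix (Fin 15) (Fin 15) ℚ) = (6:ℚ) • 1 := by
    rw [← map_ofNat (algebraMap ℚ (Matrix (Fin 15) (Fin 15) ℚ)) 6,
      Algebra.algebraMap_eq_smul_one]
  have h3 : (3 : Matrix (Fin 15) (Fin 15) ℚ) = (3:ℚ) • 1 := by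
    rw [← map_ofNat (algebraMap ℚ (Matrix (Fin 15) (Fin 15) ℚ)) 3,
      Algebra.algebraMap_eq_smul_one]
  have h5 : (5 : Matrix (Fin 15) (Fin 15) ℚ) = (5:ℚ) • 1 := by
    rw [← map_ofNat (algebraMap ℚ (Matrix (Fin 15) (Fin 15) ℚ)) 5,
      Algebra.algebraMap_eq_smul_one]
  have h15 : (15 : Matrix (Fin 15) (Fin 15) ℚ) = (15:ℚ) • 1 := by
    rw [← map_ofNat (algebraMap ℚ (Matrix (Fin 15) (Fin 15) ℚ)) 15,
      Algebra.algebraMap_eq_smul_one]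
  have hsq : A * A + 2 * A - 3 * 1 = 3 * J := by
    have h := hG.matrix_eq (α := ℚ)
    rw [hCom, pow_two] at h
    simp only [nsmul_eq_mul, Nat.cast_ofNat, Nat.cast_one] at h
    rw [h]; noncomm_ring
  have hAJ : A * J = 6 * J := by
    rw [h6, smul_mul_assoc, one_mul]
    ext i j
    simp [hJ, hA, hG.regular i]
  have hfac : (A - 1) * (A + 3) = 3 * J := by
    rw [← hsq]; noncomm_ring
  have hzero : (A - 6) * ((A - 1) * (A + 3)) = 0 := by
    rw [hfac]
    have e : (A - 6) * (3 * J) = 3 * (A * J) - 6 * (3 * J) := by noncomm_ring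
    rw [e, hAJ]; noncomm_ring
  have hqA : aeval A ((X - C (6:ℚ)) * ((X - C 1) * (X + C 3))) = 0 := by
    simp only [_root_.map_mul, _root_.map_sub, _root_.map_add, aeval_X, aeval_C, map_ofNat,
      _root_.map_one]
    exact hzero
  -- over ℂ
  set f := algebraMap ℚ ℂ with hf
  set M : Matrix (Fin 15) (Fin 15) ℂ := A.map f with hM
  have hMzero : (M - 6) * ((M - 1) * (M + 3)) = 0 := by
    have h := congrArg (f.mapMatrix) hzero
    simpa only [_root_.map_mul, _root_.map_sub, _root_.map_add, map_ofNat, _root_.map_one,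
      _root_.map_zero, RingHom.mapMatrix_apply] using h
  have htr : M.trace = 0 := by
    simp [hM, hA, Matrix.trace, Matrix.diag, Matrix.map_apply]
  obtain ⟨a, b, c, habc, hlin, hpC⟩ :=
    aux_decomp M (by simp) (aux_root M hMzero) htr
  have hinj : Function.Injective (Polynomial.map f) :=
    Polynomial.map_injective f (algebraMap ℚ ℂ).injective
  have hcm : M.charpoly = A.charpoly.map f := Matrix.charpoly_map A f
  -- only two possibilities
  have hcases : (a = 1 ∧ b = 9 ∧ c = 5) ∨ (a = 5 ∧ b = 0 ∧ c = 10) := by omega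
  rcases hcases with ⟨ra, rb, rc⟩ | ⟨ra, rb, rc⟩
  · subst ra rb rc
    apply hinj
    rw [← hcm, hpC]
    simp only [Polynomial.map_mul, Polynomial.map_pow, Polynomial.map_sub, Polynomial.map_add,
      Polynomial.map_X, Polynomial.map_C, Polynomial.map_ofNat, Polynomial.map_one,
      map_ofNat, _root_.map_one, pow_one]
  · -- impossible case : charpoly = (X-6)^5 (X+3)^10
    exfalso
    subst ra rb rc
    have hpQ : A.charpoly = (X - C (6:ℚ)) ^ 5 * (X + C 3) ^ 10 := by
      apply hinj
      rw [← hcm, hpC]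
      simp only [Polynomial.map_mul, Polynomial.map_pow, Polynomial.map_sub, Polynomial.map_add,
        Polynomial.map_X, Polynomial.map_C, Polynomial.map_ofNat, Polynomial.map_one,
        map_ofNat, _root_.map_one, pow_zero, mul_one]
    set m := minpoly ℚ A with hm
    have hm1 : m ∣ (X - C (6:ℚ)) * ((X - C 1) * (X + C 3)) := minpoly.dvd ℚ A hqA
    have hm2 : m ∣ (X - C (6:ℚ)) ^ 5 * (X + C 3) ^ 10 := by
      rw [← hpQ]; exact A.minpoly_dvd_charpoly
    have c1 : IsCoprime (X - C (6:ℚ)) (X - C 1) :=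
      isCoprime_X_sub_C_of_isUnit_sub (isUnit_iff_ne_zero.mpr (by norm_num))
    have c2 : IsCoprime (X + C (3:ℚ)) (X - C 1) := by
      have e : X + C (3:ℚ) = X - C (-3) := by rw [map_neg, sub_neg_eq_add]
      rw [e]
      exact isCoprime_X_sub_C_of_isUnit_sub (isUnit_iff_ne_zero.mpr (by norm_num))
    have hcop : IsCoprime ((X - C (6:ℚ)) ^ 5 * (X + C 3) ^ 10) (X - C (1:ℚ)) :=
      (c1.pow_left).mul_left (c2.pow_left)
    have hcopm : IsCoprime m (X - C (1:ℚ)) :=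
      IsCoprime.of_isCoprime_of_dvd_left hcop hm2
    have hdvd : m ∣ (X - C (6:ℚ)) * (X + C 3) := by
      have hq' : (X - C (6:ℚ)) * ((X - C 1) * (X + C 3)) =
          (X - C (1:ℚ)) * ((X - C 6) * (X + C 3)) := by ring
      rw [hq'] at hm1
      exact hcopm.dvd_of_dvd_mul_left hm1
    obtain ⟨t, ht⟩ := hdvd
    have haev : aeval A ((X - C (6:ℚ)) * (X + C 3)) = 0 := by
      rw [ht, _root_.map_mul, minpoly.aeval, zero_mul]
    have hmat : (A - 6) * (A + 3) = 0 := by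
      have := haev
      simp only [_root_.map_mul, _root_.map_sub, _root_.map_add, aeval_X, aeval_C, map_ofNat,
        _root_.map_one] at this
      exact this
    have d1 := hmat
    rw [h6, h3] at d1
    have d2 := hfac
    rw [h3, smul_mul_assoc, one_mul] at d2
    -- d1 : (A - 6•1) * (A + 3•1) = 0 ; d2 : (A - 1) * (A + 3•1) = 3 • J
    have key : ((5:ℚ) • (1 : Matrix (Fin 15) (Fin 15) ℚ)) * (A + (3:ℚ) • 1) = (3:ℚ) • J := by
      have e : ((5:ℚ) • (1 : Matrix (Fin 15) (Fin 15) ℚ)) * (A + (3:ℚ) • 1) =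
          (A - 1) * (A + (3:ℚ) • 1) - (A - (6:ℚ) • 1) * (A + (3:ℚ) • 1) := by
        rw [← sub_mul]
        congr 1
        module
      rw [e, d2, d1, sub_zero]
    rw [smul_mul_assoc, one_mul, smul_add, smul_smul] at key
    -- key : 5 • A + 15 • 1 = 3 • J  (with 5*3 = 15)
    have hent := congrArg (fun B => B 0 1) key
    simp only [Matrix.add_apply, Matrix.smul_apply, Matrix.one_apply, hJ, Matrix.of_apply,
      smul_eq_mul, mul_one, hA, SimpleGraph.adjMatrix_apply,
      show ((0:Fin 15) = 1) = False by norm_num, if_false] at hent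
    by_cases hadj : G.Adj 0 1 <;> simp [hadj] at hent
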